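/- Assume M has no duplicate literals. Clauses S and M are the side and main premise of subsumption resolution if and only if the indirect SAT encoding 𝓔ⁱ_SR(S,M) is satisfiable, where 𝓔ⁱ_SR uses additional Boolean variables cⱼ and is the conjunction of: positive and negative compatibility, structurality (cⱼ ↔ ⋁ᵢ b⁻ᵢⱼ for each j), revised existence (⋁ⱼ cⱼ), revised uniqueness (at most one cⱼ is true), completeness (⋀ᵢ ⋁ⱼ (b⁺ᵢⱼ ∨ b⁻ᵢⱼ)), and revised coherence (for all i, j: ¬cⱼ ∨ ¬b⁺ᵢⱼ). -/

import Mathlib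

/-- First-order terms over variables `V`. -/
inductive Trm (V : Type) : Type
  | var : V → Trm V
  | fn : ℕ → Trm V
  | app : Trm V → Trm V → Trm V
deriving DecidableEq

/-- Applying a (total) substitution to a term. -/
def Trm.subst {V : Type} (σ : V → Trm V) : Trm V → Trm V
  | .var x => σ x
  | .fn f => .fn f
  | .app t u => .app (t.subst σ) (u.subst σ)

/-- A first-order literal: a polarity, a predicate symbol and an argument term. -/
structure Lit (V : Type) where
  pos : Bool
  pred : ℕ
  arg : Trm V
deriving DecidableEq

/-- The complement of a literal. -/
def Lit.neg {V : Type} (l : Lit V) : Lit V := { l with pos := !l.pos }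

/-- Applying a substitution to a literal. -/
def Lit.subst {V : Type} (σ : V → Trm V) (l : Lit V) : Lit V :=
  { l with arg := l.arg.subst σ }

/-- A clause is a multiset of literals. -/
abbrev Clause (V : Type) := Multiset (Lit V)

/-- Applying a substitution to a clause. -/
def Clause.subst {V : Type} (σ : V → Trm V) (C : Clause V) : Clause V :=
  C.map (Lit.subst σ)

/-- `S` subsumes `M`: some substitution maps `S` to a sub-multiset of `M`. -/
def Subsumes {V : Type} (S M : Clause V) : Prop :=
  ∃ σ : V → Trm V, Clause.subst σ S ≤ M

/-- `S` and `M` are side and main premises of subsumption resolution: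
there are `σ`, a nonempty `S' ⊆ S` and `m' ∈ M` with `σ(S') = {¬m'}` and
`σ(S \ S') ⊆ M \ {m'}`. -/
def SubRes {V : Type} [DecidableEq V] (S M : Clause V) : Prop :=
  ∃ (σ : V → Trm V) (S' : Clause V) (m' : Lit V),
    S' ≤ S ∧ S' ≠ 0 ∧ m' ∈ M ∧
    (∀ l ∈ S', Lit.subst σ l = m'.neg) ∧
    (∀ l ∈ S - S', Lit.subst σ l ∈ M.erase m')

/-- Partial substitutions. -/
abbrev PSub (V : Type) := V → Option (Trm V)

/-- Partial application of a partial substitution to a term. -/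
def Trm.psubst {V : Type} (θ : PSub V) : Trm V → Option (Trm V)
  | .var x => θ x
  | .fn f => some (.fn f)
  | .app t u => (t.psubst θ).bind fun t' => (u.psubst θ).map fun u' => .app t' u'

/-- Partial application of a partial substitution to a literal. -/
def Lit.psubst {V : Type} (θ : PSub V) (l : Lit V) : Option (Lit V) :=
  (l.arg.psubst θ).map fun t => { l with arg := t }

/-- `θ ⊆ σ`: the total substitution `σ` extends the partial substitution `θ`. -/
def PSub.le {V : Type} (θ : PSub V) (σ : V → Trm V) : Prop :=
  ∀ x t, θ x = some t → σ x = t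

/-- The clause with literals `s 0, …, s (k-1)`. -/
def clauseOfFn {V : Type} {k : ℕ} (s : Fin k → Lit V) : Clause V :=
  (List.ofFn s : List (Lit V))

/-- The indexed clause `m` has no duplicate literals. -/
def NoDupIdx {V : Type} {n : ℕ} (m : Fin n → Lit V) : Prop :=
  ∀ j j' : Fin n, m j = m j' → j = j'

/-- The indexed clause `m` has no duplicate atoms: no two (distinct) literals are
equal or complementary. -/
def NoDupAtomsIdx {V : Type} {n : ℕ} (m : Fin n → Lit V) : Prop :=
  (∀ j j' : Fin n, m j = m j' → j = j') ∧ (∀ j j' : Fin n, m j ≠ (m j').neg)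

/-- `Sp` is the family of positive matchers `Σ⁺ᵢⱼ`: `Sp i j = some θ` exactly when a
substitution matching `sᵢ` to `mⱼ` exists, in which case `θ` is such a (partial)
matcher and every total match is an extension of it. -/
def IsMatcherFamilyPos {V : Type} {k n : ℕ} (s : Fin k → Lit V) (m : Fin n → Lit V)
    (Sp : Fin k → Fin n → Option (PSub V)) : Prop :=
  (∀ i j θ, Sp i j = some θ → Lit.psubst θ (s i) = some (m j)) ∧
  (∀ i j (σ : V → Trm V), Lit.subst σ (s i) = m j → ∃ θ, Sp i j = some θ ∧ PSub.le θ σ)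

/-- `Sn` is the family of negative matchers `Σ⁻ᵢⱼ` (matching `sᵢ` to `¬mⱼ`). -/
def IsMatcherFamilyNeg {V : Type} {k n : ℕ} (s : Fin k → Lit V) (m : Fin n → Lit V)
    (Sn : Fin k → Fin n → Option (PSub V)) : Prop :=
  (∀ i j θ, Sn i j = some θ → Lit.psubst θ (s i) = some ((m j).neg)) ∧
  (∀ i j (σ : V → Trm V), Lit.subst σ (s i) = (m j).neg → ∃ θ, Sn i j = some θ ∧ PSub.le θ σ)

/-- The (predicate, polarity) header of a literal. -/
def Lit.header {V : Type} (l : Lit V) : ℕ × Bool := (l.pred, l.pos)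

/-- Satisfiability of the indirect SAT encoding `𝓔ⁱ_SR(S,M)` of subsumption resolution. -/
def IndirectSRSat {V : Type} {k n : ℕ} (s : Fin k → Lit V) (m : Fin n → Lit V)
    (Sp Sn : Fin k → Fin n → Option (PSub V)) : Prop :=
  ∃ (σ : V → Trm V) (bp bn : Fin k → Fin n → Bool) (c : Fin n → Bool),
    -- positive compatibility
    (∀ i j, bp i j = true → ∃ θ, Sp i j = some θ ∧ PSub.le θ σ) ∧
    -- negative compatibility
    (∀ i j, bn i j = true → ∃ θ, Sn i j = some θ ∧ PSub.le θ σ) ∧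
    -- structurality
    (∀ j, c j = true ↔ ∃ i, bn i j = true) ∧
    -- revised existence
    (∃ j, c j = true) ∧
    -- revised uniqueness
    (∀ j j', c j = true → c j' = true → j = j') ∧
    -- completeness
    (∀ i, ∃ j, bp i j = true ∨ bn i j = true) ∧
    -- revised coherence
    (∀ i j, ¬(c j = true ∧ bp i j = true))

lemma trm_psubst_le {V : Type} (θ : PSub V) (σ : V → Trm V) (h : PSub.le θ σ) :
    ∀ t t' : Trm V, Trm.psubst θ t = some t' → Trm.subst σ t = t'
  | .var x, t', ht => by
      simp only [Trm.psubst] at ht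
      simpa [Trm.subst] using h x t' ht
  | .fn f, t', ht => by
      simp only [Trm.psubst, Option.some.injEq] at ht
      simp [Trm.subst, ht]
  | .app t u, t', ht => by
      simp only [Trm.psubst, Option.bind_eq_some_iff, Option.map_eq_some_iff] at ht
      obtain ⟨a, ha, b, hb, rfl⟩ := ht
      simp [Trm.subst, trm_psubst_le θ σ h t a ha, trm_psubst_le θ σ h u b hb]

lemma lit_psubst_le {V : Type} (θ : PSub V) (σ : V → Trm V) (h : PSub.le θ σ)
    (l l' : Lit V) (hl : Lit.psubst θ l = some l') : Lit.subst σ l = l' := by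
  simp only [Lit.psubst, Option.map_eq_some_iff] at hl
  obtain ⟨t, ht, rfl⟩ := hl
  simp [Lit.subst, trm_psubst_le θ σ h _ _ ht]

lemma mem_clauseOfFn {V : Type} {k : ℕ} (s : Fin k → Lit V) (l : Lit V) :
    l ∈ clauseOfFn s ↔ ∃ i, s i = l := by
  simp [clauseOfFn, List.mem_ofFn]

/-- Soundness of the indirect SAT encoding: with `M` having no duplicate atoms,
`S`, `M` are side and main premises of subsumption resolution iff
`𝓔ⁱ_SR(S,M)` is satisfiable. -/
theorem stmt5 {V : Type} [DecidableEq V] {k n : ℕ} (s : Fin k → Lit V) (m : Fin n → Lit V)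
    (hM : NoDupAtomsIdx m)
    (Sp Sn : Fin k → Fin n → Option (PSub V))
    (hSp : IsMatcherFamilyPos s m Sp) (hSn : IsMatcherFamilyNeg s m Sn) :
    SubRes (clauseOfFn s) (clauseOfFn m) ↔ IndirectSRSat s m Sp Sn := by
  classical
  have hMnodup : (clauseOfFn m).Nodup := by
    refine Multiset.coe_nodup.mpr (List.nodup_ofFn.mpr ?_)
    intro j j' h
    exact hM.1 j j' h
  constructor
  · rintro ⟨σ, S', m', hS'le, hS'ne, hm'M, hS'map, hrest⟩
    obtain ⟨j₀, hj₀⟩ := (mem_clauseOfFn m m').mp hm'M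
    refine ⟨σ,
      (fun i j => decide (Lit.subst σ (s i) = m j ∧ j ≠ j₀)),
      (fun i j => decide (Lit.subst σ (s i) = (m j).neg ∧ j = j₀)),
      (fun j => decide (j = j₀)), ?_, ?_, ?_, ?_, ?_, ?_, ?_⟩
    · intro i j h
      rw [decide_eq_true_iff] at h
      exact hSp.2 i j σ h.1
    · intro i j h
      rw [decide_eq_true_iff] at h
      exact hSn.2 i j σ h.1
    · intro j
      constructor
      · intro hc
        rw [decide_eq_true_iff] at hc
        subst hc
        obtain ⟨l, hl⟩ := Multiset.exists_mem_of_ne_zero hS'ne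
        obtain ⟨i, hi⟩ := (mem_clauseOfFn s l).mp (Multiset.mem_of_le hS'le hl)
        refine ⟨i, ?_⟩
        rw [decide_eq_true_iff]
        exact ⟨by rw [hi, hS'map l hl, hj₀], rfl⟩
      · rintro ⟨i, hi⟩
        rw [decide_eq_true_iff] at hi ⊢
        exact hi.2
    · exact ⟨j₀, by simp⟩
    · intro j j' hj hj'
      rw [decide_eq_true_iff] at hj hj'
      rw [hj, hj']
    · intro i
      have hsi : s i ∈ (clauseOfFn s : Clause V) := (mem_clauseOfFn s (s i)).mpr ⟨i, rfl⟩
      rw [← tsub_add_cancel_of_le hS'le, Multiset.mem_add] at hsi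
      rcases hsi with hsi | hsi
      · -- s i ∈ S - S'
        have hmem := hrest (s i) hsi
        obtain ⟨j, hj⟩ := (mem_clauseOfFn m _).mp (Multiset.mem_of_mem_erase hmem)
        refine ⟨j, Or.inl ?_⟩
        rw [decide_eq_true_iff]
        refine ⟨hj.symm, ?_⟩
        rintro rfl
        rw [← hj, hj₀] at hmem
        exact (Multiset.Nodup.notMem_erase hMnodup) hmem
      · refine ⟨j₀, Or.inr ?_⟩
        rw [decide_eq_true_iff]
        exact ⟨by rw [hS'map _ hsi, hj₀], rfl⟩
    · rintro i j ⟨hc, hbp⟩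
      rw [decide_eq_true_iff] at hc hbp
      exact hbp.2 hc
  · rintro ⟨σ, bp, bn, c, hpos, hneg, hstruct, ⟨j₀, hj₀⟩, huniq, hcomp, hcoh⟩
    -- translate booleans to substitution facts
    have hbn : ∀ i j, bn i j = true → Lit.subst σ (s i) = (m j).neg := by
      intro i j h
      obtain ⟨θ, hθ, hle⟩ := hneg i j h
      exact lit_psubst_le θ σ hle _ _ (hSn.1 i j θ hθ)
    have hbp : ∀ i j, bp i j = true → Lit.subst σ (s i) = m j := by
      intro i j h
      obtain ⟨θ, hθ, hle⟩ := hpos i j h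
      exact lit_psubst_le θ σ hle _ _ (hSp.1 i j θ hθ)
    obtain ⟨i₀, hi₀⟩ := (hstruct j₀).mp hj₀
    set P : Lit V → Prop := fun l => Lit.subst σ l = (m j₀).neg with hP
    set S' : Clause V := (clauseOfFn s).filter P with hS'
    have hS'le : S' ≤ clauseOfFn s := Multiset.filter_le _ _
    have hsub : (clauseOfFn s : Clause V) - S' = (clauseOfFn s).filter (fun l => ¬ P l) := by
      have h1 : S' + (clauseOfFn s).filter (fun l => ¬ P l) = clauseOfFn s :=
        Multiset.filter_add_not _ _
      calc (clauseOfFn s : Clause V) - S'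
          = S' + (clauseOfFn s).filter (fun l => ¬ P l) - S' := by rw [h1]
        _ = (clauseOfFn s).filter (fun l => ¬ P l) := by
              rw [add_tsub_cancel_left]
    refine ⟨σ, S', m j₀, hS'le, ?_, (mem_clauseOfFn m _).mpr ⟨j₀, rfl⟩, ?_, ?_⟩
    · intro h0
      have : s i₀ ∈ S' := by
        rw [hS', Multiset.mem_filter]
        exact ⟨(mem_clauseOfFn s _).mpr ⟨i₀, rfl⟩, hbn i₀ j₀ hi₀⟩
      rw [h0] at this
      exact Multiset.notMem_zero _ this
    · intro l hl
      exact (Multiset.mem_filter.mp hl).2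
    · intro l hl
      rw [hsub, Multiset.mem_filter] at hl
      obtain ⟨hlS, hlnP⟩ := hl
      obtain ⟨i, rfl⟩ := (mem_clauseOfFn s l).mp hlS
      obtain ⟨j, hj | hj⟩ := hcomp i
      · -- positive match
        have hij : Lit.subst σ (s i) = m j := hbp i j hj
        have hjne : j ≠ j₀ := by
          rintro rfl
          exact hcoh i j ⟨hj₀, hj⟩
        have hmne : m j ≠ m j₀ := fun h => hjne (hM.1 j j₀ h)
        rw [hij]
        exact (Multiset.mem_erase_of_ne hmne).mpr ((mem_clauseOfFn m _).mpr ⟨j, rfl⟩)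
      · exfalso
        have hcj : c j = true := (hstruct j).mpr ⟨i, hj⟩
        have : j = j₀ := huniq j j₀ hcj hj₀
        subst this
        exact hlnP (hbn i j hj)
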